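/- Let (X, μ) be a measure space, let N ≥ 1, let M ≥ 0, and let (w_n) be measurable functions with 0 ≤ w_n(x) ≤ M for a.e. x and w_n → w almost everywhere. Let (v_n) ⊂ L²(μ; ℝ^N) converge weakly in L²(μ; ℝ^N) to v, in the sense that ∫_X v_n · g dμ → ∫_X v · g dμ for every g ∈ L²(μ; ℝ^N). Then liminf_{n→∞} ∫_X w_n |v_n|² dμ ≥ ∫_X w |v|² dμ. -/

import Mathlib

open MeasureTheory Filter
open scoped RealInnerProductSpace

lemma sq_tendsto_zero_aux {a : ℕ → ℝ} (h0 : ∀ n, 0 ≤ a n)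
    (h : Tendsto (fun n => a n ^ 2) atTop (nhds 0)) : Tendsto a atTop (nhds 0) := by
  have h2 : Tendsto (fun n => Real.sqrt (a n ^ 2)) atTop (nhds (Real.sqrt 0)) :=
    (Real.continuous_sqrt.tendsto 0).comp h
  rw [Real.sqrt_zero] at h2
  exact h2.congr fun n => Real.sqrt_sq (h0 n)

theorem weighted_weak_lower_semicontinuity {X : Type*} [MeasurableSpace X] (μ : Measure X)
    (N : ℕ) (hN : 1 ≤ N) (M : ℝ) (hM : 0 ≤ M)
    (w : ℕ → X → ℝ) (w₀ : X → ℝ)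
    (hwmeas : ∀ n, Measurable (w n))
    (hwbdd : ∀ n, ∀ᵐ x ∂μ, 0 ≤ w n x ∧ w n x ≤ M)
    (hwae : ∀ᵐ x ∂μ, Tendsto (fun n => w n x) atTop (nhds (w₀ x)))
    (v : ℕ → X → EuclideanSpace ℝ (Fin N)) (v₀ : X → EuclideanSpace ℝ (Fin N))
    (hv : ∀ n, MemLp (v n) 2 μ) (hv₀ : MemLp v₀ 2 μ)
    (hweak : ∀ g : X → EuclideanSpace ℝ (Fin N), MemLp g 2 μ →
      Tendsto (fun n => ∫ x, ⟪v n x, g x⟫ ∂μ) atTop (nhds (∫ x, ⟪v₀ x, g x⟫ ∂μ))) :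
    ∫ x, w₀ x * ‖v₀ x‖ ^ 2 ∂μ ≤ atTop.liminf (fun n => ∫ x, w n x * ‖v n x‖ ^ 2 ∂μ) := by
  classical
  -- measurability and bounds for w₀
  have hw₀ae : AEMeasurable w₀ μ :=
    aemeasurable_of_tendsto_metrizable_ae _ (fun n => (hwmeas n).aemeasurable) hwae
  have hw₀m : AEStronglyMeasurable w₀ μ := hw₀ae.aestronglyMeasurable
  have hw₀bdd : ∀ᵐ x ∂μ, 0 ≤ w₀ x ∧ w₀ x ≤ M := by
    have hwbdd' : ∀ᵐ x ∂μ, ∀ n, 0 ≤ w n x ∧ w n x ≤ M := (ae_all_iff).mpr hwbdd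
    filter_upwards [hwbdd', hwae] with x hb ht
    exact ⟨le_of_tendsto_of_tendsto' tendsto_const_nhds ht fun n => (hb n).1,
           le_of_tendsto' ht fun n => (hb n).2⟩
  -- Memℒp facts
  have hwinf : ∀ n, MemLp (w n) ⊤ μ := fun n =>
    memLp_top_of_bound (hwmeas n).aestronglyMeasurable M <| (hwbdd n).mono fun x hx => by
      rw [Real.norm_eq_abs, abs_le]; exact ⟨by linarith [hx.1], hx.2⟩
  have hw₀inf : MemLp w₀ ⊤ μ :=
    memLp_top_of_bound hw₀m M <| hw₀bdd.mono fun x hx => by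
      rw [Real.norm_eq_abs, abs_le]; exact ⟨by linarith [hx.1], hx.2⟩
  have hgn : ∀ n, MemLp (fun x => w n x • v₀ x) 2 μ := fun n =>
    hv₀.smul (r := 2) (hwinf n)
  have hg₀ : MemLp (fun x => w₀ x • v₀ x) 2 μ := hv₀.smul (r := 2) hw₀inf
  -- integrability facts
  have hI0 : Integrable (fun x => ‖v₀ x‖ ^ 2) μ :=
    (memLp_two_iff_integrable_sq_norm hv₀.1).mp hv₀
  have hIvn : ∀ n, Integrable (fun x => ‖v n x‖ ^ 2) μ := fun n =>
    (memLp_two_iff_integrable_sq_norm (hv n).1).mp (hv n)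
  have hwbd' : ∀ n, ∀ᵐ x ∂μ, ‖w n x‖ ≤ M := fun n => (hwbdd n).mono fun x hx => by
    rw [Real.norm_eq_abs, abs_of_nonneg hx.1]; exact hx.2
  have hIw : ∀ n, Integrable (fun x => w n x * ‖v n x‖ ^ 2) μ := fun n =>
    (hIvn n).bdd_mul (hwmeas n).aestronglyMeasurable (hwbd' n)
  have hIwv₀ : ∀ n, Integrable (fun x => w n x * ‖v₀ x‖ ^ 2) μ := fun n =>
    hI0.bdd_mul (hwmeas n).aestronglyMeasurable (hwbd' n)
  -- Lp elements
  set F : ℕ → Lp (EuclideanSpace ℝ (Fin N)) 2 μ := fun n => (hv n).toLp (v n) with hF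
  set F₀ : Lp (EuclideanSpace ℝ (Fin N)) 2 μ := hv₀.toLp v₀ with hF₀
  have hFweak : ∀ g : Lp (EuclideanSpace ℝ (Fin N)) 2 μ, Tendsto (fun n => ⟪F n, g⟫) atTop (nhds ⟪F₀, g⟫) := by
    intro g
    have h1 : ∀ n, ⟪F n, g⟫ = ∫ x, ⟪v n x, g x⟫ ∂μ := fun n => by
      rw [L2.inner_def]
      apply integral_congr_ae
      filter_upwards [(hv n).coeFn_toLp] with x hx
      simp only [hF, hx]
    have h2 : ⟪F₀, g⟫ = ∫ x, ⟪v₀ x, g x⟫ ∂μ := by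
      rw [L2.inner_def]
      apply integral_congr_ae
      filter_upwards [hv₀.coeFn_toLp] with x hx
      simp only [hF₀, hx]
    simp only [h1, h2]
    exact hweak g (Lp.memLp g)
  -- Banach–Steinhaus: uniform bound on ‖F n‖
  obtain ⟨C, hC⟩ : ∃ C, ∀ n, ‖innerSL ℝ (F n)‖ ≤ C := by
    apply banach_steinhaus
    intro g
    obtain ⟨C, hC⟩ := ((hFweak g).norm.bddAbove_range)
    refine ⟨C, fun n => ?_⟩
    simpa using hC ⟨n, rfl⟩
  have hFC : ∀ n, ‖F n‖ ≤ C := fun n => by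
    rw [← innerSL_apply_norm (𝕜 := ℝ)]; exact hC n
  -- the weighted functions in L², and convergence G n → G₀ in norm
  set G : ℕ → Lp (EuclideanSpace ℝ (Fin N)) 2 μ := fun n => (hgn n).toLp _ with hG
  set G₀ : Lp (EuclideanSpace ℝ (Fin N)) 2 μ := hg₀.toLp _ with hG₀
  have hGsq : ∀ n, ‖G n - G₀‖ ^ 2 = ∫ x, (w n x - w₀ x) ^ 2 * ‖v₀ x‖ ^ 2 ∂μ := by
    intro n
    rw [← real_inner_self_eq_norm_sq, L2.inner_def]
    apply integral_congr_ae
    filter_upwards [Lp.coeFn_sub (G n) G₀, (hgn n).coeFn_toLp, hg₀.coeFn_toLp]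
      with x h1 h2 h3
    simp only [hG, hG₀] at h1 h2 h3 ⊢
    rw [real_inner_self_eq_norm_sq, h1, Pi.sub_apply, h2, h3, ← sub_smul, norm_smul]
    rw [mul_pow, Real.norm_eq_abs, sq_abs]
  have hGto : Tendsto (fun n => ∫ x, (w n x - w₀ x) ^ 2 * ‖v₀ x‖ ^ 2 ∂μ) atTop (nhds 0) := by
    have h0 : (0 : ℝ) = ∫ x, (0 : ℝ) ∂μ := by simp
    rw [h0]
    apply tendsto_integral_of_dominated_convergence (fun x => (2 * M) ^ 2 * ‖v₀ x‖ ^ 2)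
    · intro n
      exact ((((hwmeas n).aemeasurable.sub hw₀ae).pow_const 2).mul
        ((hv₀.1.norm.aemeasurable).pow_const 2)).aestronglyMeasurable
    · exact hI0.const_mul _
    · intro n
      filter_upwards [hwbdd n, hw₀bdd] with x hx hx₀
      rw [Real.norm_eq_abs, abs_mul, abs_of_nonneg (sq_nonneg _), abs_of_nonneg (sq_nonneg _)]
      have : (w n x - w₀ x) ^ 2 ≤ (2 * M) ^ 2 := by nlinarith [hx.1, hx.2, hx₀.1, hx₀.2]
      exact mul_le_mul_of_nonneg_right this (sq_nonneg _)
    · filter_upwards [hwae] with x hx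
      have : Tendsto (fun n => (w n x - w₀ x) ^ 2 * ‖v₀ x‖ ^ 2) atTop
          (nhds ((w₀ x - w₀ x) ^ 2 * ‖v₀ x‖ ^ 2)) :=
        (((hx.sub tendsto_const_nhds).pow 2).mul_const _)
      simpa using this
  have hGnorm : Tendsto (fun n => ‖G n - G₀‖) atTop (nhds 0) := by
    apply sq_tendsto_zero_aux (fun n => norm_nonneg _)
    exact hGto.congr fun n => (hGsq n).symm
  -- main limit of inner products
  have hFG : Tendsto (fun n => ⟪F n, G n⟫) atTop (nhds ⟪F₀, G₀⟫) := by
    have h2 : Tendsto (fun n => ⟪F n, G n - G₀⟫) atTop (nhds 0) := by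
      have hb : ∀ n, ‖⟪F n, G n - G₀⟫‖ ≤ C * ‖G n - G₀‖ := fun n =>
        le_trans (norm_inner_le_norm _ _)
          (mul_le_mul_of_nonneg_right (hFC n) (norm_nonneg _))
      have hmul : Tendsto (fun n => C * ‖G n - G₀‖) atTop (nhds 0) := by
        simpa using hGnorm.const_mul C
      exact squeeze_zero_norm hb hmul
    have h3 := (hFweak G₀).add h2
    rw [add_zero] at h3
    apply h3.congr
    intro n
    rw [inner_sub_right]
    ring
  -- identification of the inner products with integrals
  have hFGn : ∀ n, ⟪F n, G n⟫ = ∫ x, w n x * ⟪v n x, v₀ x⟫ ∂μ := by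
    intro n
    rw [L2.inner_def]
    apply integral_congr_ae
    filter_upwards [(hv n).coeFn_toLp, (hgn n).coeFn_toLp] with x h1 h2
    simp only [hF, hG] at h1 h2 ⊢
    rw [h1, h2, real_inner_smul_right]
  have hFG₀ : ⟪F₀, G₀⟫ = ∫ x, w₀ x * ‖v₀ x‖ ^ 2 ∂μ := by
    rw [L2.inner_def]
    apply integral_congr_ae
    filter_upwards [hv₀.coeFn_toLp, hg₀.coeFn_toLp] with x h1 h2
    simp only [hF₀, hG₀] at h1 h2 ⊢
    rw [h1, h2, real_inner_smul_right, real_inner_self_eq_norm_sq]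
  -- convergence of ∫ wₙ ‖v₀‖²
  have hI2 : Tendsto (fun n => ∫ x, w n x * ‖v₀ x‖ ^ 2 ∂μ) atTop
      (nhds (∫ x, w₀ x * ‖v₀ x‖ ^ 2 ∂μ)) := by
    apply tendsto_integral_of_dominated_convergence (fun x => M * ‖v₀ x‖ ^ 2)
    · intro n
      exact ((hwmeas n).aemeasurable.mul
        ((hv₀.1.norm.aemeasurable).pow_const 2)).aestronglyMeasurable
    · exact hI0.const_mul M
    · intro n
      filter_upwards [hwbdd n] with x hx
      rw [Real.norm_eq_abs, abs_mul, abs_of_nonneg hx.1, abs_of_nonneg (sq_nonneg _)]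
      exact mul_le_mul_of_nonneg_right hx.2 (sq_nonneg _)
    · filter_upwards [hwae] with x hx
      exact hx.mul_const _
  -- integrability of inner product terms
  have hIinn : ∀ n, Integrable (fun x => ⟪v n x, v₀ x⟫) μ := by
    intro n
    have h := L2.integrable_inner (𝕜 := ℝ) (F n) F₀
    apply h.congr
    filter_upwards [(hv n).coeFn_toLp, hv₀.coeFn_toLp] with x h1 h2
    simp only [hF, hF₀] at h1 h2 ⊢
    rw [h1, h2]
  have hIwinn : ∀ n, Integrable (fun x => w n x * ⟪v n x, v₀ x⟫) μ := fun n =>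
    (hIinn n).bdd_mul (hwmeas n).aestronglyMeasurable (hwbd' n)
  -- the auxiliary sequence
  set A : ℕ → ℝ := fun n =>
    2 * ∫ x, w n x * ⟪v n x, v₀ x⟫ ∂μ - ∫ x, w n x * ‖v₀ x‖ ^ 2 ∂μ with hAdef
  have hA : Tendsto A atTop (nhds (∫ x, w₀ x * ‖v₀ x‖ ^ 2 ∂μ)) := by
    have h1 : Tendsto (fun n => ∫ x, w n x * ⟪v n x, v₀ x⟫ ∂μ) atTop
        (nhds (∫ x, w₀ x * ‖v₀ x‖ ^ 2 ∂μ)) := by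
      rw [← hFG₀]
      exact hFG.congr fun n => hFGn n
    have h2 := (h1.const_mul 2).sub hI2
    have h3 : (2 : ℝ) * (∫ x, w₀ x * ‖v₀ x‖ ^ 2 ∂μ) - ∫ x, w₀ x * ‖v₀ x‖ ^ 2 ∂μ
        = ∫ x, w₀ x * ‖v₀ x‖ ^ 2 ∂μ := by ring
    rwa [h3] at h2
  have hAle : ∀ n, A n ≤ ∫ x, w n x * ‖v n x‖ ^ 2 ∂μ := by
    intro n
    have hrw : A n = ∫ x, (2 * (w n x * ⟪v n x, v₀ x⟫) - w n x * ‖v₀ x‖ ^ 2) ∂μ := by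
      rw [hAdef]
      rw [integral_sub ((hIwinn n).const_mul 2) (hIwv₀ n), integral_const_mul]
    rw [hrw]
    apply integral_mono_ae (((hIwinn n).const_mul 2).sub (hIwv₀ n)) (hIw n)
    filter_upwards [hwbdd n] with x hx
    have key : 0 ≤ w n x * ‖v n x - v₀ x‖ ^ 2 := mul_nonneg hx.1 (sq_nonneg _)
    rw [norm_sub_sq_real] at key
    simp only [Pi.sub_apply]
    nlinarith [key]
  -- conclusion
  have hC0 : 0 ≤ C := (norm_nonneg (F 0)).trans (hFC 0)
  have hFsq : ∀ n, ‖F n‖ ^ 2 = ∫ x, ‖v n x‖ ^ 2 ∂μ := by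
    intro n
    rw [← real_inner_self_eq_norm_sq, L2.inner_def]
    apply integral_congr_ae
    filter_upwards [(hv n).coeFn_toLp] with x hx
    simp only [hF] at hx ⊢
    rw [hx, real_inner_self_eq_norm_sq]
  have hBub : ∀ n, ∫ x, w n x * ‖v n x‖ ^ 2 ∂μ ≤ M * C ^ 2 := by
    intro n
    have h1 : ∫ x, w n x * ‖v n x‖ ^ 2 ∂μ ≤ ∫ x, M * ‖v n x‖ ^ 2 ∂μ := by
      apply integral_mono_ae (hIw n) ((hIvn n).const_mul M)
      filter_upwards [hwbdd n] with x hx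
      exact mul_le_mul_of_nonneg_right hx.2 (sq_nonneg _)
    rw [integral_const_mul, ← hFsq n] at h1
    exact h1.trans (mul_le_mul_of_nonneg_left
      (pow_le_pow_left₀ (norm_nonneg _) (hFC n) 2) hM)
  have hBb : atTop.IsBoundedUnder (· ≥ ·) (fun n => ∫ x, w n x * ‖v n x‖ ^ 2 ∂μ) := by
    obtain ⟨b, hb⟩ := hA.isBoundedUnder_ge
    refine ⟨b, ?_⟩
    rw [eventually_map] at hb ⊢
    exact hb.mono fun n h => le_trans h (hAle n)
  calc ∫ x, w₀ x * ‖v₀ x‖ ^ 2 ∂μ = atTop.liminf A := hA.liminf_eq.symm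
    _ ≤ atTop.liminf (fun n => ∫ x, w n x * ‖v n x‖ ^ 2 ∂μ) :=
      liminf_le_liminf (Eventually.of_forall hAle) hA.isBoundedUnder_ge
        (IsBoundedUnder.isCoboundedUnder_flip ⟨M * C ^ 2,
          eventually_map.2 (Eventually.of_forall hBub)⟩)
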